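/- Let d ≥ 1, M ≥ 2, let p, p_1, …, p_M ∈ ℝ^d with p ≠ p_m for all m, and let c > 0. Define τ_m = ‖p − p_m‖₂/c, the delay-gradient vectors g_i ∈ ℝ^M by [g_i]_m = (p_i − [p_m]_i)/(c‖p − p_m‖₂), the centering projection P = I_M − (1/M)𝟙𝟙ᵀ, the geometry matrix G ∈ ℝ^{d×d} by G_{ij} = (P g_i)ᵀ(P g_j), and for f ∈ ℝ the steering vector v(f) ∈ ℂ^M with [v(f)]_m = exp(−2πℹ f τ_m). Fix 0 < f_L < f_H, S_L > S_H > 0, N₀ > 0, and per-band gains B_L, B_H > 0 and a water level λ ≥ 0; for b ∈ {L, H} set S_{w,b} = B_b² N₀ + λ B_b (assumed > 0), γ_b = S_b B_b²/S_{w,b}, w_b = 2Mγ_b²/(1 + Mγ_b), and for f with |f| ≤ f_L set S(f) = S_L B_L² v(f)v(f)* + S_{w,L} I_M, S'_i(f) = 2πℹ f S_L B_L² (v(f)v(f)* D_i − D_i v(f)v(f)*), while for f with f_L < |f| ≤ f_H set S(f) = S_H B_H² v(f)v(f)* + S_{w,H} I_M, S'_i(f) = 2πℹ f S_H B_H² (v(f)v(f)*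 D_i − D_i v(f)v(f)*), where D_i = diag(g_i). Then for all 1 ≤ i, j ≤ d: (1/2)∫_{−f_H}^{f_H} tr(S(f)^{-1} S'_i(f) S(f)^{-1} S'_j(f)) df = (4π²/3)·(f_L³ w_L + (f_H³ − f_L³) w_H)·G_{ij}. -/

import Mathlib

open Matrix Real

section TBWAux

open MeasureTheory

variable {M : ℕ} {u : Fin M → ℂ}

private lemma tbw_vmv_mul_vmv (u w x y : Fin M → ℂ) :
    vecMulVec u w * vecMulVec x y = (w ⬝ᵥ x) • vecMulVec u y := by
  ext i j
  simp only [Matrix.mul_apply, vecMulVec_apply, Matrix.smul_apply, dotProduct, smul_eq_mul,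
    Finset.sum_mul, Finset.mul_sum]
  exact Finset.sum_congr rfl fun m _ => by ring

private lemma tbw_vmv_mul_diag (u w d : Fin M → ℂ) :
    vecMulVec u w * diagonal d = vecMulVec u fun m => w m * d m := by
  ext i j; simp [Matrix.mul_diagonal, vecMulVec_apply, mul_assoc]

private lemma tbw_diag_mul_vmv (d u w : Fin M → ℂ) :
    diagonal d * vecMulVec u w = vecMulVec (fun m => d m * u m) w := by
  ext i j; simp [Matrix.diagonal_mul, vecMulVec_apply, mul_assoc]

private lemma tbw_trace_vmv (u w : Fin M → ℂ) : trace (vecMulVec u w) = u ⬝ᵥ w := by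
  simp [Matrix.trace, Matrix.diag, vecMulVec_apply, dotProduct]

private lemma tbw_sum_one (hu : ∀ m, star (u m) * u m = 1) : star u ⬝ᵥ u = (M : ℂ) := by
  simp only [dotProduct, Pi.star_apply]
  rw [Finset.sum_congr rfl fun m _ => hu m]; simp

private lemma tbw_sum_one' (hu : ∀ m, star (u m) * u m = 1) : u ⬝ᵥ star u = (M : ℂ) := by
  simp only [dotProduct, Pi.star_apply]
  rw [Finset.sum_congr rfl fun m _ => (show u m * star (u m) = 1 by linear_combination hu m)]
  simp

private lemma tbw_dsxu (hu : ∀ m, star (u m) * u m = 1) (x : Fin M → ℂ) :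
    (fun m => star u m * x m) ⬝ᵥ u = ∑ m, x m := by
  simp only [dotProduct, Pi.star_apply]
  exact Finset.sum_congr rfl fun m _ => by linear_combination x m * hu m

private lemma tbw_dusx (hu : ∀ m, star (u m) * u m = 1) (x : Fin M → ℂ) :
    u ⬝ᵥ (fun m => star u m * x m) = ∑ m, x m := by
  simp only [dotProduct, Pi.star_apply]
  exact Finset.sum_congr rfl fun m _ => by linear_combination x m * hu m

private lemma tbw_dsux (hu : ∀ m, star (u m) * u m = 1) (x : Fin M → ℂ) :
    star u ⬝ᵥ (fun m => x m * u m) = ∑ m, x m := by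
  simp only [dotProduct, Pi.star_apply]
  exact Finset.sum_congr rfl fun m _ => by linear_combination x m * hu m

private lemma tbw_dxsu (hu : ∀ m, star (u m) * u m = 1) (x : Fin M → ℂ) :
    (fun m => x m * u m) ⬝ᵥ star u = ∑ m, x m := by
  simp only [dotProduct, Pi.star_apply]
  exact Finset.sum_congr rfl fun m _ => by linear_combination x m * hu m

private lemma tbw_dd1 (hu : ∀ m, star (u m) * u m = 1) (x y : Fin M → ℂ) :
    (fun m => star u m * x m) ⬝ᵥ (fun m => y m * u m) = ∑ m, x m * y m := by
  simp only [dotProduct, Pi.star_apply]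
  exact Finset.sum_congr rfl fun m _ => by linear_combination x m * y m * hu m

private lemma tbw_dd2 (hu : ∀ m, star (u m) * u m = 1) (x y : Fin M → ℂ) :
    (fun m => x m * u m) ⬝ᵥ (fun m => star u m * y m) = ∑ m, x m * y m := by
  simp only [dotProduct, Pi.star_apply]
  exact Finset.sum_congr rfl fun m _ => by linear_combination x m * y m * hu m

private lemma tbw_trace_core (hu : ∀ m, star (u m) * u m = 1)
    (gi gj : Fin M → ℂ) (β : ℂ) :
    trace (((1 : Matrix (Fin M) (Fin M) ℂ) - β • vecMulVec u (star u)) *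
        (vecMulVec u (star u) * diagonal gi - diagonal gi * vecMulVec u (star u)) *
        ((1 : Matrix (Fin M) (Fin M) ℂ) - β • vecMulVec u (star u)) *
        (vecMulVec u (star u) * diagonal gj - diagonal gj * vecMulVec u (star u)))
    = 2 * (1 - β * M) * ((∑ m, gi m) * (∑ m, gj m) - M * ∑ m, gi m * gj m) := by
  rw [tbw_vmv_mul_diag, tbw_vmv_mul_diag, tbw_diag_mul_vmv, tbw_diag_mul_vmv]
  simp only [sub_mul, mul_sub, one_mul, mul_one, Matrix.smul_mul, Matrix.mul_smul,
    tbw_vmv_mul_vmv, smul_smul, smul_sub, trace_sub, trace_smul, smul_eq_mul,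
    tbw_trace_vmv]
  simp only [tbw_sum_one hu, tbw_sum_one' hu, tbw_dsxu hu, tbw_dusx hu, tbw_dsux hu,
    tbw_dxsu hu, tbw_dd1 hu, tbw_dd2 hu]
  ring

private lemma tbw_QQ (hu : ∀ m, star (u m) * u m = 1) :
    vecMulVec u (star u) * vecMulVec u (star u) = (M : ℂ) • vecMulVec u (star u) := by
  rw [tbw_vmv_mul_vmv, tbw_sum_one hu]

private lemma tbw_inv_S (hu : ∀ m, star (u m) * u m = 1) (a s : ℝ) (ha : 0 < a) (hs : 0 < s) :
    (((a : ℝ) : ℂ) • vecMulVec u (star u) + ((s : ℝ) : ℂ) • (1 : Matrix (Fin M) (Fin M) ℂ))⁻¹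
      = ((s : ℂ))⁻¹ • ((1 : Matrix (Fin M) (Fin M) ℂ)
          - (((a : ℂ)) / ((s : ℂ) + (a : ℂ) * M)) • vecMulVec u (star u)) := by
  have hs' : (s : ℂ) ≠ 0 := by exact_mod_cast Complex.ofReal_ne_zero.mpr hs.ne'
  have hsa : (s : ℂ) + (a : ℂ) * M ≠ 0 := by
    have h1 : (0 : ℝ) < s + a * M := by positivity
    have h2 := Complex.ofReal_ne_zero.mpr h1.ne'
    push_cast at h2
    exact h2
  apply inv_eq_right_inv
  simp only [smul_sub, mul_sub, sub_mul, add_mul, mul_add, Matrix.mul_smul, Matrix.smul_mul,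
    smul_smul, one_mul, mul_one, tbw_QQ hu]
  match_scalars
  · field_simp
    ring
  · field_simp

private lemma tbw_core_trace_inv (hu : ∀ m, star (u m) * u m = 1) (gi gj : Fin M → ℂ)
    (a s : ℝ) (ha : 0 < a) (hs : 0 < s) (c : ℂ) :
    trace ((((a : ℝ) : ℂ) • vecMulVec u (star u) + ((s : ℝ) : ℂ) • (1 : Matrix (Fin M) (Fin M) ℂ))⁻¹
        * (c • (vecMulVec u (star u) * diagonal gi - diagonal gi * vecMulVec u (star u)))
        * (((a : ℝ) : ℂ) • vecMulVec u (star u) + ((s : ℝ) : ℂ) • (1 : Matrix (Fin M) (Fin M) ℂ))⁻¹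
        * (c • (vecMulVec u (star u) * diagonal gj - diagonal gj * vecMulVec u (star u))))
    = c ^ 2 * (2 / ((s : ℂ) * ((s : ℂ) + (a : ℂ) * M)))
        * ((∑ m, gi m) * (∑ m, gj m) - M * ∑ m, gi m * gj m) := by
  have hs' : (s : ℂ) ≠ 0 := by exact_mod_cast Complex.ofReal_ne_zero.mpr hs.ne'
  have hsa : (s : ℂ) + (a : ℂ) * M ≠ 0 := by
    have h1 : (0 : ℝ) < s + a * M := by positivity
    have h2 := Complex.ofReal_ne_zero.mpr h1.ne'
    push_cast at h2
    exact h2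
  rw [tbw_inv_S hu a s ha hs]
  simp only [Matrix.smul_mul, Matrix.mul_smul, smul_smul, trace_smul, smul_eq_mul]
  rw [tbw_trace_core hu gi gj ((a : ℂ) / ((s : ℂ) + (a : ℂ) * M))]
  field_simp
  ring

private lemma tbw_gdot (M : ℕ) (hM : 2 ≤ M) (x y : Fin M → ℝ) :
    ((1 : Matrix (Fin M) (Fin M) ℝ) - ((M : ℝ))⁻¹ • vecMulVec 1 1).mulVec x ⬝ᵥ
      ((1 : Matrix (Fin M) (Fin M) ℝ) - ((M : ℝ))⁻¹ • vecMulVec 1 1).mulVec y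
    = (∑ m, x m * y m) - (∑ m, x m) * (∑ m, y m) / M := by
  have hM0 : (M : ℝ) ≠ 0 := by
    have : (0:ℝ) < M := by exact_mod_cast Nat.pos_of_ne_zero (by omega)
    exact this.ne'
  have hmv : ∀ z : Fin M → ℝ,
      ((1 : Matrix (Fin M) (Fin M) ℝ) - ((M : ℝ))⁻¹ • vecMulVec 1 1).mulVec z
        = fun m => z m - (M : ℝ)⁻¹ * ∑ n, z n := by
    intro z; funext m
    simp [Matrix.sub_mulVec, Matrix.one_mulVec, Matrix.smul_mulVec,
      Matrix.mulVec, dotProduct, vecMulVec_apply, Matrix.sub_apply, Matrix.one_apply,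
      sub_mul, ite_mul, Finset.sum_sub_distrib, Finset.sum_ite_eq, Finset.mul_sum]
  rw [hmv, hmv]
  simp only [dotProduct]
  have hexp : ∀ m : Fin M, (x m - (M:ℝ)⁻¹ * ∑ n, x n) * (y m - (M:ℝ)⁻¹ * ∑ n, y n)
      = x m * y m - ((M:ℝ)⁻¹ * ∑ n, x n) * y m - ((M:ℝ)⁻¹ * ∑ n, y n) * x m
        + ((M:ℝ)⁻¹ * ∑ n, x n) * ((M:ℝ)⁻¹ * ∑ n, y n) := fun m => by ring
  rw [Finset.sum_congr rfl fun m _ => hexp m]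
  simp only [Finset.sum_add_distrib, Finset.sum_sub_distrib, ← Finset.mul_sum,
    Finset.sum_const, Finset.card_univ, Fintype.card_fin, nsmul_eq_mul]
  field_simp
  ring

private lemma tbw_intofReal {a b : ℝ} {f : ℝ → ℝ} :
    (∫ x in a..b, ((f x : ℝ) : ℂ)) = (((∫ x in a..b, f x) : ℝ) : ℂ) :=
  RCLike.intervalIntegral_ofReal

private lemma tbw_piece (F : ℝ → ℂ) (a b C : ℝ) (hab : a ≤ b)
    (h : ∀ᵐ x ∂(volume : Measure ℝ), x ∈ Set.Ioc a b → F x = ((C * x ^ 2 : ℝ) : ℂ)) :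
    IntervalIntegrable F volume a b ∧
      ∫ x in a..b, F x = ((C * (b ^ 3 - a ^ 3) / 3 : ℝ) : ℂ) := by
  have hcont : Continuous fun x : ℝ => ((C * x ^ 2 : ℝ) : ℂ) := by fun_prop
  have h' : ∀ᵐ x ∂(volume : Measure ℝ), x ∈ Set.uIoc a b → F x = ((C * x ^ 2 : ℝ) : ℂ) := by
    rw [Set.uIoc_of_le hab]; exact h
  have hae : (fun x : ℝ => ((C * x ^ 2 : ℝ) : ℂ)) =ᵐ[volume.restrict (Set.uIoc a b)] F := by
    exact (MeasureTheory.ae_restrict_iff' measurableSet_uIoc).mpr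
      (by filter_upwards [h'] with x hx hmem; exact (hx hmem).symm)
  refine ⟨(hcont.intervalIntegrable a b).congr_ae hae, ?_⟩
  rw [intervalIntegral.integral_congr_ae h',
    tbw_intofReal (f := fun x => C * x ^ 2), intervalIntegral.integral_const_mul,
    integral_pow]
  push_cast
  ring

end TBWAux
/-- **Two-band Whittle Fisher-information rate identity** (general per-band gains
`B_L, B_H > 0`): the half-integral over `[−f_H, f_H]` of the Whittle trace term of
the compressed cross-spectral density equals
`(4π²/3)(f_L³ w_L + (f_H³ − f_L³) w_H) G_{ij}`. -/
theorem two_band_whittle_FI_rate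
    (d M : ℕ) (hd : 1 ≤ d) (hM : 2 ≤ M)
    (p : EuclideanSpace ℝ (Fin d)) (ps : Fin M → EuclideanSpace ℝ (Fin d))
    (hps : ∀ m, p ≠ ps m) (c : ℝ) (hc : 0 < c)
    (τ : Fin M → ℝ) (hτ : ∀ m, τ m = ‖p - ps m‖ / c)
    (g : Fin d → Fin M → ℝ)
    (hg : ∀ i m, g i m = (p i - ps m i) / (c * ‖p - ps m‖))
    (P : Matrix (Fin M) (Fin M) ℝ)
    (hP : P = (1 : Matrix (Fin M) (Fin M) ℝ) - ((M : ℝ))⁻¹ • vecMulVec 1 1)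
    (G : Fin d → Fin d → ℝ)
    (hG : ∀ i j, G i j = P.mulVec (g i) ⬝ᵥ P.mulVec (g j))
    (v : ℝ → Fin M → ℂ)
    (hv : ∀ f m, v f m = Complex.exp (-(2 * π * Complex.I * f * τ m)))
    (fL fH SL SH N0 BL BH lam : ℝ)
    (hfL : 0 < fL) (hfLH : fL < fH)
    (hSH : 0 < SH) (hSLH : SH < SL) (hN0 : 0 < N0)
    (hBL : 0 < BL) (hBH : 0 < BH) (hlam : 0 ≤ lam)
    (SwL SwH : ℝ)
    (hSwL : SwL = BL ^ 2 * N0 + lam * BL) (hSwLpos : 0 < SwL)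
    (hSwH : SwH = BH ^ 2 * N0 + lam * BH) (hSwHpos : 0 < SwH)
    (γL γH : ℝ) (hγL : γL = SL * BL ^ 2 / SwL) (hγH : γH = SH * BH ^ 2 / SwH)
    (wL wH : ℝ)
    (hwL : wL = 2 * M * γL ^ 2 / (1 + M * γL))
    (hwH : wH = 2 * M * γH ^ 2 / (1 + M * γH))
    (D : Fin d → Matrix (Fin M) (Fin M) ℂ)
    (hD : ∀ i, D i = Matrix.diagonal fun m => (g i m : ℂ))
    (S : ℝ → Matrix (Fin M) (Fin M) ℂ)
    (S' : Fin d → ℝ → Matrix (Fin M) (Fin M) ℂ)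
    (hSlow : ∀ f : ℝ, |f| ≤ fL →
      S f = ((SL * BL ^ 2 : ℝ) : ℂ) • vecMulVec (v f) (star (v f))
        + ((SwL : ℝ) : ℂ) • (1 : Matrix (Fin M) (Fin M) ℂ))
    (hShigh : ∀ f : ℝ, fL < |f| → |f| ≤ fH →
      S f = ((SH * BH ^ 2 : ℝ) : ℂ) • vecMulVec (v f) (star (v f))
        + ((SwH : ℝ) : ℂ) • (1 : Matrix (Fin M) (Fin M) ℂ))
    (hS'low : ∀ (i : Fin d) (f : ℝ), |f| ≤ fL →
      S' i f = (2 * π * Complex.I * f * (SL * BL ^ 2)) •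
        (vecMulVec (v f) (star (v f)) * D i - D i * vecMulVec (v f) (star (v f))))
    (hS'high : ∀ (i : Fin d) (f : ℝ), fL < |f| → |f| ≤ fH →
      S' i f = (2 * π * Complex.I * f * (SH * BH ^ 2)) •
        (vecMulVec (v f) (star (v f)) * D i - D i * vecMulVec (v f) (star (v f)))) :
    ∀ i j : Fin d,
      (1 / 2 : ℂ) * ∫ f in (-fH)..fH,
          Matrix.trace ((S f)⁻¹ * S' i f * (S f)⁻¹ * S' j f)
        = (((4 * π ^ 2 / 3) * (fL ^ 3 * wL + (fH ^ 3 - fL ^ 3) * wH) * G i j : ℝ) : ℂ) := by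

  intro i j
  have hMpos : (0:ℝ) < M := by exact_mod_cast Nat.pos_of_ne_zero (by omega)
  have hM0 : (M:ℝ) ≠ 0 := hMpos.ne'
  have hSL : 0 < SL := hSH.trans hSLH
  have haL : 0 < SL * BL ^ 2 := by positivity
  have haH : 0 < SH * BH ^ 2 := by positivity
  -- unit modulus of the steering vector
  have huv : ∀ (f : ℝ) (m : Fin M), star (v f m) * v f m = 1 := by
    intro f m
    rw [hv, mul_comm, Complex.star_def, Complex.mul_conj, ← Complex.sq_norm, Complex.norm_exp]
    have h0 : (-(2 * ↑π * Complex.I * ↑f * ↑(τ m))).re = 0 := by simp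
    rw [h0, Real.exp_zero]
    norm_num
  -- the geometry matrix entry
  have hGv : G i j = (∑ m, g i m * g j m) - (∑ m, g i m) * (∑ m, g j m) / M := by
    rw [hG, hP]; exact tbw_gdot M hM (g i) (g j)
  -- pointwise value in the low band
  have keyL : ∀ f : ℝ, |f| ≤ fL → Matrix.trace ((S f)⁻¹ * S' i f * (S f)⁻¹ * S' j f)
      = (((4 * π ^ 2 * wL * G i j) * f ^ 2 : ℝ) : ℂ) := by
    intro f hf
    rw [hSlow f hf, hS'low i f hf, hS'low j f hf, hD i, hD j]
    rw [tbw_core_trace_inv (huv f) _ _ (SL * BL ^ 2) SwL haL hSwLpos _]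
    have h1γ : (0:ℝ) < 1 + (M:ℝ) * (SL * BL ^ 2 / SwL) := by positivity
    have hrr : (4 * π ^ 2 * wL * G i j) * f ^ 2
        = (4 * π ^ 2 * f ^ 2 * (SL * BL ^ 2) ^ 2) * (2 / (SwL * (SwL + SL * BL ^ 2 * M)))
          * ((M:ℝ) * (∑ m, g i m * g j m) - (∑ m, g i m) * (∑ m, g j m)) := by
      rw [hGv, hwL, hγL]
      field_simp
    rw [hrr]
    push_cast
    linear_combination (4 * (π:ℂ) ^ 2 * (f:ℂ) ^ 2 * ((SL:ℂ) * (BL:ℂ) ^ 2) ^ 2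
        * (2 / ((SwL:ℂ) * ((SwL:ℂ) + (SL:ℂ) * (BL:ℂ) ^ 2 * (M:ℂ))))
        * ((∑ m, ((g i m : ℝ) : ℂ)) * (∑ m, ((g j m : ℝ) : ℂ))
            - (M:ℂ) * ∑ m, ((g i m : ℝ) : ℂ) * ((g j m : ℝ) : ℂ))) * Complex.I_sq
  -- pointwise value in the high band
  have keyH : ∀ f : ℝ, fL < |f| → |f| ≤ fH →
      Matrix.trace ((S f)⁻¹ * S' i f * (S f)⁻¹ * S' j f)
      = (((4 * π ^ 2 * wH * G i j) * f ^ 2 : ℝ) : ℂ) := by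
    intro f hf1 hf2
    rw [hShigh f hf1 hf2, hS'high i f hf1 hf2, hS'high j f hf1 hf2, hD i, hD j]
    rw [tbw_core_trace_inv (huv f) _ _ (SH * BH ^ 2) SwH haH hSwHpos _]
    have h1γ : (0:ℝ) < 1 + (M:ℝ) * (SH * BH ^ 2 / SwH) := by positivity
    have hrr : (4 * π ^ 2 * wH * G i j) * f ^ 2
        = (4 * π ^ 2 * f ^ 2 * (SH * BH ^ 2) ^ 2) * (2 / (SwH * (SwH + SH * BH ^ 2 * M)))
          * ((M:ℝ) * (∑ m, g i m * g j m) - (∑ m, g i m) * (∑ m, g j m)) := by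
      rw [hGv, hwH, hγH]
      field_simp
    rw [hrr]
    push_cast
    linear_combination (4 * (π:ℂ) ^ 2 * (f:ℂ) ^ 2 * ((SH:ℂ) * (BH:ℂ) ^ 2) ^ 2
        * (2 / ((SwH:ℂ) * ((SwH:ℂ) + (SH:ℂ) * (BH:ℂ) ^ 2 * (M:ℂ))))
        * ((∑ m, ((g i m : ℝ) : ℂ)) * (∑ m, ((g j m : ℝ) : ℂ))
            - (M:ℂ) * ∑ m, ((g i m : ℝ) : ℂ) * ((g j m : ℝ) : ℂ))) * Complex.I_sq
  -- the three integral pieces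
  have hne : ∀ᵐ x : ℝ ∂(MeasureTheory.volume), x ≠ -fL := by
    rw [MeasureTheory.ae_iff]
    simpa [not_not, Set.setOf_eq_eq_singleton] using Real.volume_singleton
  have p1 := tbw_piece (fun f => Matrix.trace ((S f)⁻¹ * S' i f * (S f)⁻¹ * S' j f))
      (-fH) (-fL) (4 * π ^ 2 * wH * G i j) (by linarith) (by
        filter_upwards [hne] with x hx hmem
        have hx2 : x < -fL := lt_of_le_of_ne hmem.2 hx
        exact keyH x (by rw [abs_of_neg (by linarith : x < 0)]; linarith)
          (by rw [abs_of_neg (by linarith : x < 0)]; linarith [hmem.1]))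
  have p2 := tbw_piece (fun f => Matrix.trace ((S f)⁻¹ * S' i f * (S f)⁻¹ * S' j f))
      (-fL) fL (4 * π ^ 2 * wL * G i j) (by linarith) (MeasureTheory.ae_of_all _
        (fun x hmem => keyL x (abs_le.mpr ⟨le_of_lt hmem.1, hmem.2⟩)))
  have p3 := tbw_piece (fun f => Matrix.trace ((S f)⁻¹ * S' i f * (S f)⁻¹ * S' j f))
      fL fH (4 * π ^ 2 * wH * G i j) hfLH.le (MeasureTheory.ae_of_all _
        (fun x hmem => keyH x (by rw [abs_of_pos (hfL.trans hmem.1)]; exact hmem.1)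
          (by rw [abs_of_pos (hfL.trans hmem.1)]; exact hmem.2)))
  have h23 := p2.1.trans p3.1
  have hsplit : (∫ f in (-fH)..fH, Matrix.trace ((S f)⁻¹ * S' i f * (S f)⁻¹ * S' j f))
      = (∫ f in (-fH)..(-fL), Matrix.trace ((S f)⁻¹ * S' i f * (S f)⁻¹ * S' j f))
        + ((∫ f in (-fL)..fL, Matrix.trace ((S f)⁻¹ * S' i f * (S f)⁻¹ * S' j f))
          + (∫ f in fL..fH, Matrix.trace ((S f)⁻¹ * S' i f * (S f)⁻¹ * S' j f))) := by
    rw [intervalIntegral.integral_add_adjacent_intervals p2.1 p3.1,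
      intervalIntegral.integral_add_adjacent_intervals p1.1 h23]
  rw [hsplit, p1.2, p2.2, p3.2]
  push_cast
  ring
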